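/- A group homomorphism φ : G₁ → G₂ between finitely generated groups (each equipped with a word metric from a finite generating set) is a quasiisometry if and only if its kernel is finite and its image has finite index in G₂. -/

import Mathlib

/-- The word length of `g` with respect to a generating set `S`. -/
noncomputable def wordLength {G : Type*} [Group G] (S : Set G) (g : G) : ℕ :=
  sInf {n : ℕ | ∃ w : List G, w.length = n ∧ (∀ x ∈ w, x ∈ S ∨ x⁻¹ ∈ S) ∧ w.prod = g}

/-- The word metric on `G` associated to a generating set `S`. -/
noncomputable def wordDist {G : Type*} [Group G] (S : Set G) (g h : G) : ℝ :=
  (wordLength S (g⁻¹ * h) : ℝ)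

/-- A quasiisometry with respect to given distance functions. -/
def IsQIWith {X Y : Type*} (d₁ : X → X → ℝ) (d₂ : Y → Y → ℝ) (f : X → Y) : Prop :=
  ∃ lam C : ℝ, 0 < lam ∧ 0 < C ∧
    (∀ x y : X, lam⁻¹ * d₁ x y - C ≤ d₂ (f x) (f y) ∧ d₂ (f x) (f y) ≤ lam * d₁ x y + C) ∧
    ∀ y : Y, ∃ x : X, d₂ (f x) y < C

variable {G : Type*} [Group G] {S : Set G}

lemma wl_set_nonempty (hgen : Subgroup.closure S = ⊤) (g : G) :
    {n : ℕ | ∃ w : List G, w.length = n ∧ (∀ x ∈ w, x ∈ S ∨ x⁻¹ ∈ S) ∧ w.prod = g}.Nonempty := by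
  have hg : g ∈ Subgroup.closure S := by rw [hgen]; trivial
  have hg' : g ∈ Submonoid.closure (S ∪ S⁻¹) := by
    rw [← Subgroup.closure_toSubmonoid S]; exact hg
  obtain ⟨l, hl, hp⟩ := Submonoid.exists_list_of_mem_closure hg'
  refine ⟨l.length, l, rfl, fun x hx => ?_, hp⟩
  rcases hl x hx with h | h
  · exact Or.inl h
  · exact Or.inr (Set.mem_inv.mp h)

lemma wl_spec (hgen : Subgroup.closure S = ⊤) (g : G) :
    ∃ w : List G, w.length = wordLength S g ∧ (∀ x ∈ w, x ∈ S ∨ x⁻¹ ∈ S) ∧ w.prod = g :=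
  Nat.sInf_mem (wl_set_nonempty hgen g)

lemma wl_le {g : G} {w : List G} (hw : ∀ x ∈ w, x ∈ S ∨ x⁻¹ ∈ S) (hp : w.prod = g) :
    wordLength S g ≤ w.length :=
  Nat.sInf_le ⟨w, rfl, hw, hp⟩

lemma wl_one : wordLength S (1 : G) = 0 :=
  Nat.le_zero.mp (wl_le (w := []) (by simp) (by simp))

lemma wl_mul (hgen : Subgroup.closure S = ⊤) (a b : G) :
    wordLength S (a * b) ≤ wordLength S a + wordLength S b := by
  obtain ⟨w₁, h1, hw1, hp1⟩ := wl_spec hgen a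
  obtain ⟨w₂, h2, hw2, hp2⟩ := wl_spec hgen b
  calc wordLength S (a * b) ≤ (w₁ ++ w₂).length := by
        refine wl_le (fun x hx => ?_) (by simp [hp1, hp2])
        rcases List.mem_append.mp hx with h | h
        exacts [hw1 x h, hw2 x h]
    _ = wordLength S a + wordLength S b := by simp [h1, h2]

lemma wl_inv_le (hgen : Subgroup.closure S = ⊤) (a : G) :
    wordLength S a⁻¹ ≤ wordLength S a := by
  obtain ⟨w, h1, hw, hp⟩ := wl_spec hgen a
  calc wordLength S a⁻¹ ≤ ((w.map (·⁻¹)).reverse).length := by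
        refine wl_le (fun x hx => ?_) ?_
        · simp only [List.mem_reverse, List.mem_map] at hx
          obtain ⟨y, hy, rfl⟩ := hx
          rcases hw y hy with h | h
          · exact Or.inr (by simpa using h)
          · exact Or.inl h
        · rw [List.prod_reverse_noncomm]
          simp [hp]
    _ = wordLength S a := by simp [h1]

lemma wl_inv (hgen : Subgroup.closure S = ⊤) (a : G) :
    wordLength S a⁻¹ = wordLength S a :=
  le_antisymm (wl_inv_le hgen a) (by simpa using wl_inv_le hgen a⁻¹)

lemma wl_prod_le (hgen : Subgroup.closure S = ⊤) (w : List G) :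
    wordLength S w.prod ≤ (w.map (wordLength S)).sum := by
  induction w with
  | nil => simp [wl_one]
  | cons x w ih =>
      simp only [List.prod_cons, List.map_cons, List.sum_cons]
      exact le_trans (wl_mul hgen x w.prod) (by omega)

lemma wl_gen {s : G} (hs : s ∈ S ∨ s⁻¹ ∈ S) : wordLength S s ≤ 1 :=
  wl_le (w := [s]) (by simpa using hs) (by simp)

lemma wl_prodset_finite (hfin : S.Finite) (n : ℕ) :
    {g : G | ∃ w : List G, w.length ≤ n ∧ (∀ x ∈ w, x ∈ S ∨ x⁻¹ ∈ S) ∧ w.prod = g}.Finite := by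
  induction n with
  | zero =>
      refine Set.Finite.subset (Set.finite_singleton 1) (fun g hg => ?_)
      obtain ⟨w, hw, _, hp⟩ := hg
      simp only [Nat.le_zero, List.length_eq_zero_iff] at hw
      simp [← hp, hw]
  | succ n ih =>
      refine Set.Finite.subset (Set.Finite.image2 (· * ·) ((hfin.union hfin.inv).insert 1) ih)
        (fun g hg => ?_)
      obtain ⟨w, hw, hmem, hp⟩ := hg
      cases w with
      | nil =>
          exact ⟨1, Set.mem_insert _ _, 1, ⟨[], by simp⟩, by simp [← hp]⟩
      | cons x w' =>
          refine ⟨x, ?_, w'.prod, ⟨w', ?_, fun y hy => hmem y (List.mem_cons_of_mem _ hy), rfl⟩, by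
            simp [← hp]⟩
          · rcases hmem x List.mem_cons_self with h | h
            · exact Set.mem_insert_of_mem _ (Or.inl h)
            · exact Set.mem_insert_of_mem _ (Or.inr (Set.mem_inv.mpr (by simpa using h)))
          · simpa using hw

lemma wl_ball_finite (hfin : S.Finite) (hgen : Subgroup.closure S = ⊤) (n : ℕ) :
    {g : G | wordLength S g ≤ n}.Finite := by
  refine Set.Finite.subset (wl_prodset_finite hfin n) (fun g hg => ?_)
  obtain ⟨w, h1, hw, hp⟩ := wl_spec hgen g
  exact ⟨w, h1.le.trans hg, hw, hp⟩

section fwd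
variable {G₁ G₂ : Type*} [Group G₁] [Group G₂] {S₁ : Set G₁} {S₂ : Set G₂}

lemma fwd_dir (h₁fin : S₁.Finite) (h₂fin : S₂.Finite)
    (h₁gen : Subgroup.closure S₁ = ⊤) (h₂gen : Subgroup.closure S₂ = ⊤)
    (φ : G₁ →* G₂) (hqi : IsQIWith (wordDist S₁) (wordDist S₂) φ) :
    (φ.ker : Set G₁).Finite ∧ φ.range.FiniteIndex := by
  obtain ⟨lam, C, hlam, hC, hbd, hsur⟩ := hqi
  constructor
  · refine Set.Finite.subset (wl_ball_finite h₁fin h₁gen ⌊lam * C⌋₊) (fun k hk => ?_)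
    have hk1 : φ k = 1 := hk
    have := (hbd 1 k).1
    rw [wordDist, wordDist, hk1, map_one] at this
    simp only [inv_one, one_mul, wl_one, Nat.cast_zero] at this
    have h2 : lam⁻¹ * (wordLength S₁ k : ℝ) ≤ C := by linarith
    have h3 : (wordLength S₁ k : ℝ) ≤ lam * C := by
      rw [inv_mul_le_iff₀ hlam] at h2; linarith [h2]
    exact Nat.le_floor h3
  · have hfinq : Finite (G₂ ⧸ φ.range) := by
      rw [← Set.finite_univ_iff]
      refine Set.Finite.subset
        (Set.Finite.image (fun b => (QuotientGroup.mk b⁻¹ : G₂ ⧸ φ.range))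
          (wl_ball_finite h₂fin h₂gen ⌈C⌉₊)) (fun q _ => ?_)
      obtain ⟨y, rfl⟩ := QuotientGroup.mk_surjective q
      obtain ⟨x, hx⟩ := hsur y⁻¹
      set b := (φ x)⁻¹ * y⁻¹ with hb
      refine ⟨b, ?_, ?_⟩
      · have : (wordLength S₂ b : ℝ) < C := hx
        have : (wordLength S₂ b : ℝ) ≤ (⌈C⌉₊ : ℝ) := this.le.trans (Nat.le_ceil C)
        exact_mod_cast this
      · refine (QuotientGroup.eq ..).mpr ⟨x⁻¹, ?_⟩
        rw [map_inv, inv_inv, hb]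
        group
    exact Subgroup.finiteIndex_of_finite_quotient
end fwd

section bwd
variable {G₁ G₂ : Type*} [Group G₁] [Group G₂] {S₁ : Set G₁} {S₂ : Set G₂}

lemma wl_map_le (h₁fin : S₁.Finite) (h₁gen : Subgroup.closure S₁ = ⊤)
    (h₂gen : Subgroup.closure S₂ = ⊤) (φ : G₁ →* G₂) (g : G₁) :
    wordLength S₂ (φ g) ≤ (h₁fin.toFinset.sup fun s => wordLength S₂ (φ s)) * wordLength S₁ g := by
  set M := h₁fin.toFinset.sup fun s => wordLength S₂ (φ s) with hM
  obtain ⟨w, h1, hw, hp⟩ := wl_spec h₁gen g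
  have : φ g = (w.map φ).prod := by rw [← hp, map_list_prod]
  rw [this]
  calc wordLength S₂ (w.map φ).prod ≤ ((w.map φ).map (wordLength S₂)).sum :=
        wl_prod_le h₂gen _
    _ ≤ ((w.map φ).map (wordLength S₂)).length * M := by
        refine List.sum_le_card_nsmul _ _ (fun n hn => ?_)
        simp only [List.map_map, List.mem_map, Function.comp] at hn
        obtain ⟨x, hx, rfl⟩ := hn
        rcases hw x hx with h | h
        · exact Finset.le_sup (f := fun s => wordLength S₂ (φ s)) (h₁fin.mem_toFinset.mpr h)
        · calc wordLength S₂ (φ x) = wordLength S₂ (φ x⁻¹)⁻¹ := by simp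
            _ = wordLength S₂ (φ x⁻¹) := wl_inv h₂gen _
            _ ≤ M := Finset.le_sup (f := fun s => wordLength S₂ (φ s))
                (h₁fin.mem_toFinset.mpr h)
    _ = M * wordLength S₁ g := by simp [h1, Nat.mul_comm]

lemma bwd_dir (h₁fin : S₁.Finite) (h₂fin : S₂.Finite)
    (h₁gen : Subgroup.closure S₁ = ⊤) (h₂gen : Subgroup.closure S₂ = ⊤)
    (φ : G₁ →* G₂) (hker : (φ.ker : Set G₁).Finite) (hind : φ.range.FiniteIndex) :
    IsQIWith (wordDist S₁) (wordDist S₂) φ := by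
  classical
  haveI := hind
  haveI : Finite (G₂ ⧸ φ.range) := inferInstance
  -- coset representative function
  set r : G₂ → G₂ := fun y => (QuotientGroup.mk y : G₂ ⧸ φ.range).out with hrdef
  have hrk : ∀ y : G₂, (r y)⁻¹ * y ∈ φ.range := by
    intro y
    have h1 : (QuotientGroup.mk (r y) : G₂ ⧸ φ.range) = QuotientGroup.mk y :=
      QuotientGroup.out_eq' _
    exact (QuotientGroup.eq ..).mp h1
  have hrconst : ∀ y h : G₂, h ∈ φ.range → r (y * h) = r y := by
    intro y h hh
    have : (QuotientGroup.mk (y * h) : G₂ ⧸ φ.range) = QuotientGroup.mk y := by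
      refine ((QuotientGroup.eq ..).mpr ?_).symm
      simpa using hh
    simp only [hrdef, this]
  -- section of φ on its range
  set c : G₂ → G₁ := fun y => if h : y ∈ φ.range then h.choose else 1 with hcdef
  have hc : ∀ y ∈ φ.range, φ (c y) = y := by
    intro y hy
    simp only [hcdef, dif_pos hy]
    exact hy.choose_spec
  -- finite sets and constants
  have hRfin : (Set.range r).Finite := by
    have : Set.range r ⊆ Set.range (fun q : G₂ ⧸ φ.range => q.out) := by
      rintro x ⟨y, rfl⟩; exact ⟨QuotientGroup.mk y, rfl⟩
    exact (Set.finite_range _).subset this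
  have hEfin : (Set.image2 (fun t ρ => (r (t * ρ))⁻¹ * t * ρ) (S₂ ∪ S₂⁻¹)
      (Set.range r)).Finite :=
    Set.Finite.image2 _ (h₂fin.union h₂fin.inv) hRfin
  set K := hEfin.toFinset.sup (fun x => wordLength S₁ (c x)) with hK
  set Kker := hker.toFinset.sup (wordLength S₁) with hKker
  set N := hRfin.toFinset.sup (wordLength S₂) with hN
  set M := h₁fin.toFinset.sup fun s => wordLength S₂ (φ s) with hM
  set u := c (r 1) with hu
  have hr1 : r 1 ∈ φ.range := by
    have := hrk 1
    rw [mul_one] at this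
    simpa using (φ.range).inv_mem this
  have hφu : φ u = r 1 := hc _ hr1
  set B := 2 * wordLength S₁ u + Kker with hB
  -- key induction
  have key : ∀ w : List G₂, (∀ t ∈ w, t ∈ S₂ ∨ t⁻¹ ∈ S₂) →
      ∃ g₁ : G₁, φ g₁ = (r w.prod)⁻¹ * w.prod * r 1 ∧
        wordLength S₁ g₁ ≤ K * w.length := by
    intro w
    induction w with
    | nil =>
        intro _
        exact ⟨1, by simp, by simp [wl_one]⟩
    | cons t w' ih =>
        intro hmem
        obtain ⟨g₁', hφ', hlen'⟩ := ih (fun x hx => hmem x (List.mem_cons_of_mem _ hx))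
        set ρ := r w'.prod with hρ
        set ee := (r (t * ρ))⁻¹ * t * ρ with hee
        have hee_range : ee ∈ φ.range := by
          have := hrk (t * ρ)
          rwa [hee, mul_assoc]
        have hr2 : r (t * w'.prod) = r (t * ρ) := by
          have : t * w'.prod = (t * ρ) * (ρ⁻¹ * w'.prod) := by group
          rw [this, hrconst _ _ (hrk w'.prod)]
        refine ⟨c ee * g₁', ?_, ?_⟩
        · rw [map_mul, hc _ hee_range, hφ', List.prod_cons, hr2, hee]
          group
        · have h1 : wordLength S₁ (c ee * g₁') ≤ wordLength S₁ (c ee) + wordLength S₁ g₁' :=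
            wl_mul h₁gen _ _
          have h2 : wordLength S₁ (c ee) ≤ K := by
            refine Finset.le_sup (f := fun x => wordLength S₁ (c x)) ?_
            rw [hEfin.mem_toFinset]
            refine Set.mem_image2_of_mem ?_ ⟨w'.prod, rfl⟩
            rcases hmem t List.mem_cons_self with h | h
            · exact Or.inl h
            · exact Or.inr (Set.mem_inv.mpr h)
          simp only [List.length_cons]
          calc wordLength S₁ (c ee * g₁') ≤ K + K * w'.length := by omega
            _ = K * (w'.length + 1) := by ring
  -- main lower bound
  have main : ∀ g : G₁, wordLength S₁ g ≤ K * wordLength S₂ (φ g) + B := by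
    intro g
    obtain ⟨w, h1, hw, hp⟩ := wl_spec h₂gen (φ g)
    obtain ⟨g₁, hφ₁, hlen₁⟩ := key w hw
    rw [hp] at hφ₁
    have hrφg : r (φ g) = r 1 := by
      have : φ g = 1 * φ g := (one_mul _).symm
      rw [this, hrconst 1 (φ g) ⟨g, rfl⟩]
    have hz : φ (u * g₁ * u⁻¹) = φ g := by
      rw [map_mul, map_mul, map_inv, hφu, hφ₁, hrφg]
      group
    set z := (u * g₁ * u⁻¹)⁻¹ * g with hz2
    have hzker : z ∈ φ.ker := by
      rw [MonoidHom.mem_ker, hz2, map_mul, map_inv, hz]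
      group
    have hgeq : g = u * g₁ * u⁻¹ * z := by rw [hz2]; group
    have hwlz : wordLength S₁ z ≤ Kker :=
      Finset.le_sup (f := wordLength S₁) (hker.mem_toFinset.mpr hzker)
    calc wordLength S₁ g = wordLength S₁ (u * g₁ * u⁻¹ * z) := by rw [← hgeq]
      _ ≤ wordLength S₁ (u * g₁ * u⁻¹) + wordLength S₁ z := wl_mul h₁gen _ _
      _ ≤ wordLength S₁ (u * g₁) + wordLength S₁ u⁻¹ + wordLength S₁ z := by
            have := wl_mul h₁gen (u * g₁) u⁻¹; omega
      _ ≤ wordLength S₁ u + wordLength S₁ g₁ + wordLength S₁ u⁻¹ + wordLength S₁ z := by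
            have := wl_mul h₁gen u g₁; omega
      _ ≤ K * wordLength S₂ (φ g) + B := by
            rw [wl_inv h₁gen, hB]
            have : wordLength S₁ g₁ ≤ K * wordLength S₂ (φ g) := by rw [← h1]; exact hlen₁
            omega
  -- assemble the quasiisometry
  refine ⟨(M : ℝ) + (K : ℝ) + 1, (B : ℝ) + (N : ℝ) + 1, by positivity, by positivity, ?_, ?_⟩
  · intro x y
    have hd2 : wordDist S₂ (φ x) (φ y) = (wordLength S₂ (φ (x⁻¹ * y)) : ℝ) := by
      rw [wordDist, map_mul, map_inv]
    have hd1 : wordDist S₁ x y = (wordLength S₁ (x⁻¹ * y) : ℝ) := rfl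
    constructor
    · rw [hd1, hd2]
      have hmain := main (x⁻¹ * y)
      have hmainR : (wordLength S₁ (x⁻¹*y) : ℝ) ≤ K * (wordLength S₂ (φ (x⁻¹*y)) : ℝ) + B := by
        exact_mod_cast hmain
      rw [sub_le_iff_le_add, inv_mul_le_iff₀ (by positivity)]
      have h0 : (0:ℝ) ≤ (wordLength S₂ (φ (x⁻¹*y)) : ℝ) := Nat.cast_nonneg _
      nlinarith [Nat.cast_nonneg (α := ℝ) K, Nat.cast_nonneg (α := ℝ) M,
        Nat.cast_nonneg (α := ℝ) B, Nat.cast_nonneg (α := ℝ) N]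
    · rw [hd1, hd2]
      have hup := wl_map_le h₁fin h₁gen h₂gen φ (x⁻¹ * y)
      have hupR : (wordLength S₂ (φ (x⁻¹*y)) : ℝ) ≤ M * (wordLength S₁ (x⁻¹*y) : ℝ) := by
        exact_mod_cast hup
      have h0 : (0:ℝ) ≤ (wordLength S₁ (x⁻¹*y) : ℝ) := Nat.cast_nonneg _
      nlinarith [Nat.cast_nonneg (α := ℝ) K, Nat.cast_nonneg (α := ℝ) B,
        Nat.cast_nonneg (α := ℝ) N]
  · intro y
    have hky : (r y⁻¹)⁻¹ * y⁻¹ ∈ φ.range := hrk y⁻¹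
    have hmem : ((r y⁻¹)⁻¹ * y⁻¹)⁻¹ ∈ φ.range := (φ.range).inv_mem hky
    refine ⟨c (((r y⁻¹)⁻¹ * y⁻¹)⁻¹), ?_⟩
    have hφc : φ (c (((r y⁻¹)⁻¹ * y⁻¹)⁻¹)) = ((r y⁻¹)⁻¹ * y⁻¹)⁻¹ := hc _ hmem
    have : wordDist S₂ (φ (c (((r y⁻¹)⁻¹ * y⁻¹)⁻¹))) y = (wordLength S₂ (r y⁻¹)⁻¹ : ℝ) := by
      rw [wordDist, hφc]
      congr 2
      group
    rw [this, wl_inv h₂gen]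
    have : wordLength S₂ (r y⁻¹) ≤ N :=
      Finset.le_sup (f := wordLength S₂) (hRfin.mem_toFinset.mpr ⟨y⁻¹, rfl⟩)
    have hNR : (wordLength S₂ (r y⁻¹) : ℝ) ≤ (N : ℝ) := by exact_mod_cast this
    have : (0:ℝ) ≤ (B:ℝ) := Nat.cast_nonneg _
    linarith
end bwd

theorem hom_quasiIsometry_iff (G₁ G₂ : Type) [Group G₁] [Group G₂]
    (S₁ : Set G₁) (S₂ : Set G₂) (h₁fin : S₁.Finite) (h₂fin : S₂.Finite)
    (h₁gen : Subgroup.closure S₁ = ⊤) (h₂gen : Subgroup.closure S₂ = ⊤)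
    (φ : G₁ →* G₂) :
    IsQIWith (wordDist S₁) (wordDist S₂) φ ↔
      (φ.ker : Set G₁).Finite ∧ φ.range.FiniteIndex := by
  constructor
  · exact fwd_dir h₁fin h₂fin h₁gen h₂gen φ
  · exact fun ⟨h1, h2⟩ => bwd_dir h₁fin h₂fin h₁gen h₂gen φ h1 h2
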